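/- Fix m ≥ 1 and let w ∈ ℝ^m ⊗ ℝ^m ⊗ ℝ^m. Suppose that: (i) (P_σ ⊗ P_σ ⊗ P_σ) w = w for every permutation σ of {1,…,m}, where P_σ is the associated permutation matrix; and (ii) (D_j ⊗ D_j ⊗ 1) w = w and (D_j ⊗ 1 ⊗ D_j) w = w for every j ∈ {1,…,m}, where D_j is the diagonal matrix sending e_j to −e_j and fixing all other standard basis vectors. Then w is a real scalar multiple of Σ_{i=1}^{m} e_i ⊗ e_i ⊗ e_i. -/

import Mathlib

open scoped BigOperators TensorProduct

noncomputable section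

/-- The linear map on Euclidean `ℝ^m` given by the permutation matrix of `σ`,
sending `e_j` to `e_{σ j}`. -/
def permLin (m : ℕ) (σ : Equiv.Perm (Fin m)) :
    EuclideanSpace ℝ (Fin m) →ₗ[ℝ] EuclideanSpace ℝ (Fin m) :=
  Matrix.toEuclideanLin (Matrix.of fun i j => if σ j = i then (1 : ℝ) else 0)

/-- The linear map on Euclidean `ℝ^m` given by the diagonal matrix sending `e_j` to
`−e_j` and fixing all other standard basis vectors. -/
def signFlip (m : ℕ) (j : Fin m) :
    EuclideanSpace ℝ (Fin m) →ₗ[ℝ] EuclideanSpace ℝ (Fin m) :=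
  Matrix.toEuclideanLin (Matrix.diagonal fun i => if i = j then (-1 : ℝ) else 1)

lemma permLin_single (m : ℕ) (σ : Equiv.Perm (Fin m)) (j : Fin m) :
    permLin m σ (EuclideanSpace.single j 1) = EuclideanSpace.single (σ j) 1 := by
  ext i
  simp [permLin, Matrix.toEuclideanLin_apply, Matrix.mulVec, dotProduct,
    EuclideanSpace.single_apply, eq_comm]

lemma signFlip_single (m : ℕ) (j i : Fin m) :
    signFlip m j (EuclideanSpace.single i 1) =
      (if i = j then (-1 : ℝ) else 1) • EuclideanSpace.single i 1 := by
  ext k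
  simp only [signFlip, Matrix.toEuclideanLin_apply, PiLp.smul_apply, smul_eq_mul]
  by_cases h : k = i <;>
    simp [Matrix.mulVec_diagonal, EuclideanSpace.single_apply, h]

/-- a tensor `w ∈ ℝ^m ⊗ ℝ^m ⊗ ℝ^m` fixed by all simultaneous permutations
`P_σ ⊗ P_σ ⊗ P_σ` and by all pairs of coordinate sign flips `D_j ⊗ D_j ⊗ 1`,
`D_j ⊗ 1 ⊗ D_j` is a scalar multiple of `∑ᵢ eᵢ ⊗ eᵢ ⊗ eᵢ`. -/
theorem fixed_tensor_is_multiple_of_diagonal (m : ℕ) (hm : 1 ≤ m)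
    (w : EuclideanSpace ℝ (Fin m) ⊗[ℝ]
          (EuclideanSpace ℝ (Fin m) ⊗[ℝ] EuclideanSpace ℝ (Fin m)))
    (hperm : ∀ σ : Equiv.Perm (Fin m),
      TensorProduct.map (permLin m σ) (TensorProduct.map (permLin m σ) (permLin m σ)) w = w)
    (hflip₁ : ∀ j : Fin m,
      TensorProduct.map (signFlip m j) (TensorProduct.map (signFlip m j) LinearMap.id) w = w)
    (hflip₂ : ∀ j : Fin m,
      TensorProduct.map (signFlip m j) (TensorProduct.map LinearMap.id (signFlip m j)) w = w) :
    ∃ c : ℝ, w = c • ∑ i : Fin m,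
      EuclideanSpace.single i (1 : ℝ) ⊗ₜ[ℝ]
        (EuclideanSpace.single i (1 : ℝ) ⊗ₜ[ℝ] EuclideanSpace.single i (1 : ℝ)) := by
  classical
  let b := (EuclideanSpace.basisFun (Fin m) ℝ).toBasis
  let B := b.tensorProduct (b.tensorProduct b)
  have hb : ∀ i, b i = EuclideanSpace.single i (1:ℝ) := by
    intro i; simp [b, EuclideanSpace.basisFun_apply]
  have hB : ∀ p : Fin m × Fin m × Fin m, B p =
      EuclideanSpace.single p.1 (1:ℝ) ⊗ₜ[ℝ]
        (EuclideanSpace.single p.2.1 (1:ℝ) ⊗ₜ[ℝ] EuclideanSpace.single p.2.2 (1:ℝ)) := by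
    intro p
    simp [B, Module.Basis.tensorProduct_apply', hb]
  have hrepr : ∀ (c : Fin m × Fin m × Fin m → ℝ) p,
      B.repr (∑ p', c p' • B p') p = c p := by
    intro c p
    simp [map_sum, Finsupp.single_apply, Finset.sum_ite_eq']
  set g : Fin m × Fin m × Fin m → ℝ := fun p => B.repr w p with hg
  have hw : w = ∑ p, g p • B p := (B.sum_repr w).symm
  have hflipact₁ : ∀ (j : Fin m) (p : Fin m × Fin m × Fin m),
      TensorProduct.map (signFlip m j) (TensorProduct.map (signFlip m j) LinearMap.id) (B p)
        = ((if p.1 = j then (-1:ℝ) else 1) * (if p.2.1 = j then (-1:ℝ) else 1)) • B p := by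
    intro j p
    rw [hB p]
    simp only [TensorProduct.map_tmul, LinearMap.id_coe, id_eq, signFlip_single,
      TensorProduct.tmul_smul, ← TensorProduct.smul_tmul', smul_smul]
    rw [mul_comm]
  have hflipact₂ : ∀ (j : Fin m) (p : Fin m × Fin m × Fin m),
      TensorProduct.map (signFlip m j) (TensorProduct.map LinearMap.id (signFlip m j)) (B p)
        = ((if p.1 = j then (-1:ℝ) else 1) * (if p.2.2 = j then (-1:ℝ) else 1)) • B p := by
    intro j p
    rw [hB p]
    simp only [TensorProduct.map_tmul, LinearMap.id_coe, id_eq, signFlip_single,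
      TensorProduct.tmul_smul, ← TensorProduct.smul_tmul', smul_smul]
    rw [mul_comm]
  -- off-diagonal coefficients vanish
  have hoff₁ : ∀ p : Fin m × Fin m × Fin m, p.1 ≠ p.2.1 → g p = 0 := by
    intro p hne
    have h : TensorProduct.map (signFlip m p.1)
        (TensorProduct.map (signFlip m p.1) LinearMap.id) (∑ p', g p' • B p')
        = ∑ p', g p' • B p' := by rw [← hw]; exact hflip₁ p.1
    rw [map_sum] at h
    simp only [map_smul, hflipact₁, smul_smul] at h
    have h' := congrArg (fun x => B.repr x p) h
    simp only [hrepr] at h'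
    simp only [if_pos rfl, if_true, if_neg (show ¬ p.2.1 = p.1 from fun hh => hne hh.symm),
      mul_one] at h'
    linarith
  have hoff₂ : ∀ p : Fin m × Fin m × Fin m, p.1 ≠ p.2.2 → g p = 0 := by
    intro p hne
    have h : TensorProduct.map (signFlip m p.1)
        (TensorProduct.map LinearMap.id (signFlip m p.1)) (∑ p', g p' • B p')
        = ∑ p', g p' • B p' := by rw [← hw]; exact hflip₂ p.1
    rw [map_sum] at h
    simp only [map_smul, hflipact₂, smul_smul] at h
    have h' := congrArg (fun x => B.repr x p) h
    simp only [hrepr] at h'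
    simp only [if_pos rfl, if_true, if_neg (show ¬ p.2.2 = p.1 from fun hh => hne hh.symm),
      mul_one] at h'
    linarith
  -- permutation invariance of diagonal coefficients
  have hpermg : ∀ (σ : Equiv.Perm (Fin m)) (p : Fin m × Fin m × Fin m),
      g (σ p.1, σ p.2.1, σ p.2.2) = g p := by
    intro σ p
    have hact : ∀ p' : Fin m × Fin m × Fin m,
        TensorProduct.map (permLin m σ) (TensorProduct.map (permLin m σ) (permLin m σ)) (B p')
          = B (σ p'.1, σ p'.2.1, σ p'.2.2) := by
      intro p'
      rw [hB p', hB (σ p'.1, σ p'.2.1, σ p'.2.2)]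
      simp only [TensorProduct.map_tmul, permLin_single]
    have h : TensorProduct.map (permLin m σ) (TensorProduct.map (permLin m σ) (permLin m σ))
        (∑ p', g p' • B p') = ∑ p', g p' • B p' := by rw [← hw]; exact hperm σ
    rw [map_sum] at h
    simp only [map_smul, hact] at h
    -- reindex the sum on the left
    have hsum : ∑ p', g p' • B (σ p'.1, σ p'.2.1, σ p'.2.2)
        = ∑ q, g (σ⁻¹ q.1, σ⁻¹ q.2.1, σ⁻¹ q.2.2) • B q := by
      rw [← Equiv.sum_comp (σ.prodCongr (σ.prodCongr σ))
        (fun q => g (σ⁻¹ q.1, σ⁻¹ q.2.1, σ⁻¹ q.2.2) • B q)]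
      simp [Prod.map]
    rw [hsum] at h
    have h' := congrArg (fun x => B.repr x (σ p.1, σ p.2.1, σ p.2.2)) h
    simp only [hrepr] at h'
    simpa using h'.symm
  -- conclude
  obtain ⟨i0, _⟩ : ∃ i : Fin m, True := ⟨⟨0, hm⟩, trivial⟩
  refine ⟨g (i0, i0, i0), ?_⟩
  have hgdiag : ∀ i : Fin m, g (i, i, i) = g (i0, i0, i0) := by
    intro i
    have := hpermg (Equiv.swap i0 i) (i0, i0, i0)
    simpa [Equiv.swap_apply_left] using this
  have himg : ∑ p ∈ Finset.univ.image (fun i : Fin m => ((i, i, i) : Fin m × Fin m × Fin m)),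
      g p • B p = ∑ i : Fin m, g (i, i, i) • B (i, i, i) :=
    Finset.sum_image (fun x _ y _ h => by simpa using congrArg Prod.fst h)
  have hsplit : ∑ p : Fin m × Fin m × Fin m, g p • B p
      = ∑ i : Fin m, g (i, i, i) • B (i, i, i) := by
    rw [← himg]
    refine (Finset.sum_subset (Finset.subset_univ _) ?_).symm
    rintro ⟨a, bb, cc⟩ _ hp
    have : a ≠ bb ∨ a ≠ cc := by
      by_contra hc
      push_neg at hc
      exact hp (Finset.mem_image.2 ⟨a, Finset.mem_univ _, by rw [← hc.1, ← hc.2]⟩)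
    rcases this with h | h
    · rw [hoff₁ (a, bb, cc) h, zero_smul]
    · rw [hoff₂ (a, bb, cc) h, zero_smul]
  rw [hw, hsplit]
  rw [Finset.smul_sum]
  refine Finset.sum_congr rfl fun i _ => ?_
  rw [hgdiag i, hB (i, i, i)]
end
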